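/- Let S be a generalized left-symmetric algebra with commutation factor ε, and let F₁ ∈ Z²(S,S) be a degree-zero 2-cocycle (i.e., it satisfies the cocycle identity of the infinitesimal deformation). Define μ₂(x,y,z) := F₁(F₁(x,y),z) − F₁(x,F₁(y,z)) − ε(α,β)(F₁(F₁(y,x),z) − F₁(y,F₁(x,z))) for x ∈ S_α, y ∈ S_β, z ∈ S. Then μ₂ ∈ Z³(S,S), i.e., dμ₂ = 0 where d is the generalized left-symmetric coboundary operator. -/
import Mathlib


def IsCommutationFactor {k Γ : Type*} [Field k] [AddCommGroup Γ] (ε : Γ → Γ → k) : Prop :=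
  (∀ α β, ε α β * ε β α = 1) ∧
  (∀ α β γ, ε α (β + γ) = ε α β * ε α γ) ∧
  (∀ α β γ, ε (α + β) γ = ε α γ * ε β γ)

section

variable {k Γ S M : Type*} [Field k] [AddCommGroup Γ]
  [AddCommGroup S] [Module k S] [AddCommGroup M] [Module k M]

/-- The operator `D_t : Cⁱ(S,M) → Cⁱ⁺¹(S,M)` (cochains of arity `n` are encoded as maps
taking the degrees of the homogeneous arguments together with the arguments;
`β` is the degree of the cochain `f`). -/
def lsaD (ε : Γ → Γ → k) (mul : S →ₗ[k] S →ₗ[k] S)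
    (l : S →ₗ[k] M →ₗ[k] M) (r : M →ₗ[k] S →ₗ[k] M)
    (β : Γ) (t : ℕ) {i : ℕ} (f : (Fin i → Γ) → (Fin i → S) → M) :
    (Fin (i + 1) → Γ) → (Fin (i + 1) → S) → M :=
  fun αs xs =>
    if h : 1 ≤ t ∧ t ≤ i then
      let T : Fin (i + 1) := ⟨t - 1, by omega⟩
      let αs' : Fin i → Γ := T.removeNth αs
      let xs' : Fin i → S := T.removeNth xs
      ε (β + ∑ s ∈ Finset.Iio T, αs s) (αs T) • l (xs T) (f αs' xs')
        - ε (αs T) (∑ s ∈ Finset.Ioo T (Fin.last i), αs s) •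
            f (fun j => if (j : ℕ) = i - 1 then αs T + αs (Fin.last i) else αs' j)
              (fun j => if (j : ℕ) = i - 1 then mul (xs T) (xs (Fin.last i)) else xs' j)
        + ε (αs T) (∑ s ∈ Finset.Ioo T (Fin.last i), αs s) •
            r (f (fun j => if (j : ℕ) = i - 1 then αs T else αs' j)
                 (fun j => if (j : ℕ) = i - 1 then xs T else xs' j))
              (xs (Fin.last i))
        - ∑ J ∈ Finset.Ioo T (Fin.last i),
            ε (αs T) (∑ s ∈ Finset.Ioo T J, αs s) •
              f (fun j => if (j : ℕ) = (J : ℕ) - 1 then αs T + αs J else αs' j)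
                (fun j => if (j : ℕ) = (J : ℕ) - 1 then
                    mul (xs T) (xs J) - ε (αs T) (αs J) • mul (xs J) (xs T)
                  else xs' j)
    else 0

/-- The generalized left-symmetric coboundary operator `d = −Σ_t (−1)^t D_t`. -/
def lsaCoboundary (ε : Γ → Γ → k) (mul : S →ₗ[k] S →ₗ[k] S)
    (l : S →ₗ[k] M →ₗ[k] M) (r : M →ₗ[k] S →ₗ[k] M)
    (β : Γ) {i : ℕ} (f : (Fin i → Γ) → (Fin i → S) → M) :
    (Fin (i + 1) → Γ) → (Fin (i + 1) → S) → M :=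
  fun αs xs => -∑ t ∈ Finset.Icc 1 i, ((-1 : ℤ) ^ t) • lsaD ε mul l r β t f αs xs

/-- `μ₂(x,y,z) = F₁(F₁(x,y),z) − F₁(x,F₁(y,z)) − ε(α,β)(F₁(F₁(y,x),z) − F₁(y,F₁(x,z)))`,
as a degree-zero 3-cochain. -/
def mu2 (ε : Γ → Γ → k) (F1 : S →ₗ[k] S →ₗ[k] S) :
    (Fin 3 → Γ) → (Fin 3 → S) → S := fun αs xs =>
  F1 (F1 (xs 0) (xs 1)) (xs 2) - F1 (xs 0) (F1 (xs 1) (xs 2)) -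
    ε (αs 0) (αs 1) • (F1 (F1 (xs 1) (xs 0)) (xs 2) - F1 (xs 1) (F1 (xs 0) (xs 2)))

set_option maxHeartbeats 4000000 in
/-- If `F₁` is a degree-zero 2-cocycle on a generalized left-symmetric algebra `S` (with
the regular bimodule), then `μ₂ ∈ Z³(S,S)`: `d μ₂ = 0`. -/
theorem stmt15 [CharZero k]
    (ε : Γ → Γ → k) (𝒜 : Γ → Submodule k S) (mul : S →ₗ[k] S →ₗ[k] S)
    (hε : IsCommutationFactor ε)
    (hgr : ∀ ⦃α β : Γ⦄ ⦃x y : S⦄, x ∈ 𝒜 α → y ∈ 𝒜 β → mul x y ∈ 𝒜 (α + β))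
    (hlsi : ∀ ⦃α β : Γ⦄ ⦃x y : S⦄ (z : S), x ∈ 𝒜 α → y ∈ 𝒜 β →
      mul (mul x y) z - mul x (mul y z) = ε α β • (mul (mul y x) z - mul y (mul x z)))
    (F1 : S →ₗ[k] S →ₗ[k] S)
    (hF1deg : ∀ ⦃α β : Γ⦄ ⦃x y : S⦄, x ∈ 𝒜 α → y ∈ 𝒜 β → F1 x y ∈ 𝒜 (α + β))
    (hF1cocycle : ∀ ⦃α β : Γ⦄ ⦃x y : S⦄ (z : S), x ∈ 𝒜 α → y ∈ 𝒜 β →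
      mul (F1 x y) z + F1 (mul x y) z - mul x (F1 y z) - F1 x (mul y z) =
        ε α β • (F1 (mul y x) z + mul (F1 y x) z - F1 y (mul x z) - mul y (F1 x z)))
    (αs : Fin 4 → Γ) (xs : Fin 4 → S) (hxs : ∀ j, xs j ∈ 𝒜 (αs j)) :
    lsaCoboundary ε mul mul mul (0 : Γ) (mu2 ε F1) αs xs = 0 := by
  obtain ⟨hsym, haddR, haddL⟩ := hε
  have hne : ∀ α β, ε α β ≠ 0 := fun α β h => by simpa [h] using hsym α β
  have hz1 : ∀ α, ε α 0 = 1 := fun α =>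
    mul_left_cancel₀ (hne α 0)
      (by rw [← haddR α 0 0, add_zero, mul_one])
  have hz2 : ∀ α, ε 0 α = 1 := fun α =>
    mul_left_cancel₀ (hne 0 α)
      (by rw [← haddL 0 0 α, add_zero, mul_one])
  have hinv : ∀ α β, ε β α = (ε α β)⁻¹ := fun α β =>
    eq_inv_of_mul_eq_one_left (hsym β α)
  have e10 : ε (αs 1) (αs 0) = (ε (αs 0) (αs 1))⁻¹ := hinv _ _
  have e20 : ε (αs 2) (αs 0) = (ε (αs 0) (αs 2))⁻¹ := hinv _ _
  have e21 : ε (αs 2) (αs 1) = (ε (αs 1) (αs 2))⁻¹ := hinv _ _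
  have n01 : ε (αs 0) (αs 1) ≠ 0 := hne _ _
  have n02 : ε (αs 0) (αs 2) ≠ 0 := hne _ _
  have n03 : ε (αs 0) (αs 3) ≠ 0 := hne _ _
  have n12 : ε (αs 1) (αs 2) ≠ 0 := hne _ _
  have n13 : ε (αs 1) (αs 3) ≠ 0 := hne _ _
  have n23 : ε (αs 2) (αs 3) ≠ 0 := hne _ _
  have h0 := sub_eq_zero_of_eq (hF1cocycle (F1 (xs 2) (xs 3)) (hxs 0) (hxs 1))
  have h1 := sub_eq_zero_of_eq (hF1cocycle (xs 2) (hxs 0) (hxs 1))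
  have h2 := sub_eq_zero_of_eq (hF1cocycle (xs 3) (hxs 0) (hxs 1))
  have h3 := sub_eq_zero_of_eq (hF1cocycle (F1 (xs 1) (xs 3)) (hxs 0) (hxs 2))
  have h4 := sub_eq_zero_of_eq (hF1cocycle (xs 1) (hxs 0) (hxs 2))
  have h5 := sub_eq_zero_of_eq (hF1cocycle (xs 3) (hxs 0) (hxs 2))
  have h6 := sub_eq_zero_of_eq (hF1cocycle (xs 3) (hF1deg (hxs 1) (hxs 2)) (hxs 0))
  have h7 := sub_eq_zero_of_eq (hF1cocycle (xs 3) (hF1deg (hxs 2) (hxs 1)) (hxs 0))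
  have h8 := sub_eq_zero_of_eq (hF1cocycle (F1 (xs 0) (xs 3)) (hxs 1) (hxs 2))
  have h9 := sub_eq_zero_of_eq (hF1cocycle (xs 0) (hxs 1) (hxs 2))
  have h10 := sub_eq_zero_of_eq (hF1cocycle (xs 3) (hxs 1) (hxs 2))
  have h11 := sub_eq_zero_of_eq (hF1cocycle (xs 3) (hF1deg (hxs 0) (hxs 2)) (hxs 1))
  have h12 := sub_eq_zero_of_eq (hF1cocycle (xs 3) (hF1deg (hxs 2) (hxs 0)) (hxs 1))
  have h13 := sub_eq_zero_of_eq (hF1cocycle (xs 3) (hF1deg (hxs 0) (hxs 1)) (hxs 2))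
  have h14 := sub_eq_zero_of_eq (hF1cocycle (xs 3) (hF1deg (hxs 1) (hxs 0)) (hxs 2))
  have hzero : (0:S) =
      ((1:k)) • ((mul (F1 (xs 0) (xs 1)) (F1 (xs 2) (xs 3)) + F1 (mul (xs 0) (xs 1)) (F1 (xs 2) (xs 3)) - mul (xs 0) (F1 (xs 1) (F1 (xs 2) (xs 3))) - F1 (xs 0) (mul (xs 1) (F1 (xs 2) (xs 3)))) - ε (αs 0) (αs 1) • (F1 (mul (xs 1) (xs 0)) (F1 (xs 2) (xs 3)) + mul (F1 (xs 1) (xs 0)) (F1 (xs 2) (xs 3)) - F1 (xs 1) (mul (xs 0) (F1 (xs 2) (xs 3))) - mul (xs 1) (F1 (xs 0) (F1 (xs 2) (xs 3))))) +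
      (-((1:k)) • (F1 ((mul (F1 (xs 0) (xs 1)) (xs 2) + F1 (mul (xs 0) (xs 1)) (xs 2) - mul (xs 0) (F1 (xs 1) (xs 2)) - F1 (xs 0) (mul (xs 1) (xs 2))) - ε (αs 0) (αs 1) • (F1 (mul (xs 1) (xs 0)) (xs 2) + mul (F1 (xs 1) (xs 0)) (xs 2) - F1 (xs 1) (mul (xs 0) (xs 2)) - mul (xs 1) (F1 (xs 0) (xs 2)))) (xs 3))) +
      (-(ε (αs 0) (αs 2) * ε (αs 1) (αs 2)) • (F1 (xs 2) ((mul (F1 (xs 0) (xs 1)) (xs 3) + F1 (mul (xs 0) (xs 1)) (xs 3) - mul (xs 0) (F1 (xs 1) (xs 3)) - F1 (xs 0) (mul (xs 1) (xs 3))) - ε (αs 0) (αs 1) • (F1 (mul (xs 1) (xs 0)) (xs 3) + mul (F1 (xs 1) (xs 0)) (xs 3) - F1 (xs 1) (mul (xs 0) (xs 3)) - mul (xs 1) (F1 (xs 0) (xs 3)))))) +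
      (-(ε (αs 1) (αs 2)) • ((mul (F1 (xs 0) (xs 2)) (F1 (xs 1) (xs 3)) + F1 (mul (xs 0) (xs 2)) (F1 (xs 1) (xs 3)) - mul (xs 0) (F1 (xs 2) (F1 (xs 1) (xs 3))) - F1 (xs 0) (mul (xs 2) (F1 (xs 1) (xs 3)))) - ε (αs 0) (αs 2) • (F1 (mul (xs 2) (xs 0)) (F1 (xs 1) (xs 3)) + mul (F1 (xs 2) (xs 0)) (F1 (xs 1) (xs 3)) - F1 (xs 2) (mul (xs 0) (F1 (xs 1) (xs 3))) - mul (xs 2) (F1 (xs 0) (F1 (xs 1) (xs 3)))))) +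
      (ε (αs 1) (αs 2)) • (F1 ((mul (F1 (xs 0) (xs 2)) (xs 1) + F1 (mul (xs 0) (xs 2)) (xs 1) - mul (xs 0) (F1 (xs 2) (xs 1)) - F1 (xs 0) (mul (xs 2) (xs 1))) - ε (αs 0) (αs 2) • (F1 (mul (xs 2) (xs 0)) (xs 1) + mul (F1 (xs 2) (xs 0)) (xs 1) - F1 (xs 2) (mul (xs 0) (xs 1)) - mul (xs 2) (F1 (xs 0) (xs 1)))) (xs 3)) +
      (ε (αs 0) (αs 1)) • (F1 (xs 1) ((mul (F1 (xs 0) (xs 2)) (xs 3) + F1 (mul (xs 0) (xs 2)) (xs 3) - mul (xs 0) (F1 (xs 2) (xs 3)) - F1 (xs 0) (mul (xs 2) (xs 3))) - ε (αs 0) (αs 2) • (F1 (mul (xs 2) (xs 0)) (xs 3) + mul (F1 (xs 2) (xs 0)) (xs 3) - F1 (xs 2) (mul (xs 0) (xs 3)) - mul (xs 2) (F1 (xs 0) (xs 3))))) +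
      (ε (αs 0) (αs 1) * ε (αs 0) (αs 2)) • ((mul (F1 (F1 (xs 1) (xs 2)) (xs 0)) (xs 3) + F1 (mul (F1 (xs 1) (xs 2)) (xs 0)) (xs 3) - mul (F1 (xs 1) (xs 2)) (F1 (xs 0) (xs 3)) - F1 (F1 (xs 1) (xs 2)) (mul (xs 0) (xs 3))) - ε (αs 1 + αs 2) (αs 0) • (F1 (mul (xs 0) (F1 (xs 1) (xs 2))) (xs 3) + mul (F1 (xs 0) (F1 (xs 1) (xs 2))) (xs 3) - F1 (xs 0) (mul (F1 (xs 1) (xs 2)) (xs 3)) - mul (xs 0) (F1 (F1 (xs 1) (xs 2)) (xs 3)))) +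
      (-(ε (αs 0) (αs 1) * ε (αs 0) (αs 2) * ε (αs 1) (αs 2)) • ((mul (F1 (F1 (xs 2) (xs 1)) (xs 0)) (xs 3) + F1 (mul (F1 (xs 2) (xs 1)) (xs 0)) (xs 3) - mul (F1 (xs 2) (xs 1)) (F1 (xs 0) (xs 3)) - F1 (F1 (xs 2) (xs 1)) (mul (xs 0) (xs 3))) - ε (αs 2 + αs 1) (αs 0) • (F1 (mul (xs 0) (F1 (xs 2) (xs 1))) (xs 3) + mul (F1 (xs 0) (F1 (xs 2) (xs 1))) (xs 3) - F1 (xs 0) (mul (F1 (xs 2) (xs 1)) (xs 3)) - mul (xs 0) (F1 (F1 (xs 2) (xs 1)) (xs 3))))) +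
      (ε (αs 0) (αs 1) * ε (αs 0) (αs 2)) • ((mul (F1 (xs 1) (xs 2)) (F1 (xs 0) (xs 3)) + F1 (mul (xs 1) (xs 2)) (F1 (xs 0) (xs 3)) - mul (xs 1) (F1 (xs 2) (F1 (xs 0) (xs 3))) - F1 (xs 1) (mul (xs 2) (F1 (xs 0) (xs 3)))) - ε (αs 1) (αs 2) • (F1 (mul (xs 2) (xs 1)) (F1 (xs 0) (xs 3)) + mul (F1 (xs 2) (xs 1)) (F1 (xs 0) (xs 3)) - F1 (xs 2) (mul (xs 1) (F1 (xs 0) (xs 3))) - mul (xs 2) (F1 (xs 1) (F1 (xs 0) (xs 3))))) +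
      (-(ε (αs 0) (αs 1) * ε (αs 0) (αs 2)) • (F1 ((mul (F1 (xs 1) (xs 2)) (xs 0) + F1 (mul (xs 1) (xs 2)) (xs 0) - mul (xs 1) (F1 (xs 2) (xs 0)) - F1 (xs 1) (mul (xs 2) (xs 0))) - ε (αs 1) (αs 2) • (F1 (mul (xs 2) (xs 1)) (xs 0) + mul (F1 (xs 2) (xs 1)) (xs 0) - F1 (xs 2) (mul (xs 1) (xs 0)) - mul (xs 2) (F1 (xs 1) (xs 0)))) (xs 3))) +
      (-((1:k)) • (F1 (xs 0) ((mul (F1 (xs 1) (xs 2)) (xs 3) + F1 (mul (xs 1) (xs 2)) (xs 3) - mul (xs 1) (F1 (xs 2) (xs 3)) - F1 (xs 1) (mul (xs 2) (xs 3))) - ε (αs 1) (αs 2) • (F1 (mul (xs 2) (xs 1)) (xs 3) + mul (F1 (xs 2) (xs 1)) (xs 3) - F1 (xs 2) (mul (xs 1) (xs 3)) - mul (xs 2) (F1 (xs 1) (xs 3)))))) +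
      (-(ε (αs 1) (αs 2)) • ((mul (F1 (F1 (xs 0) (xs 2)) (xs 1)) (xs 3) + F1 (mul (F1 (xs 0) (xs 2)) (xs 1)) (xs 3) - mul (F1 (xs 0) (xs 2)) (F1 (xs 1) (xs 3)) - F1 (F1 (xs 0) (xs 2)) (mul (xs 1) (xs 3))) - ε (αs 0 + αs 2) (αs 1) • (F1 (mul (xs 1) (F1 (xs 0) (xs 2))) (xs 3) + mul (F1 (xs 1) (F1 (xs 0) (xs 2))) (xs 3) - F1 (xs 1) (mul (F1 (xs 0) (xs 2)) (xs 3)) - mul (xs 1) (F1 (F1 (xs 0) (xs 2)) (xs 3))))) +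
      (ε (αs 0) (αs 2) * ε (αs 1) (αs 2)) • ((mul (F1 (F1 (xs 2) (xs 0)) (xs 1)) (xs 3) + F1 (mul (F1 (xs 2) (xs 0)) (xs 1)) (xs 3) - mul (F1 (xs 2) (xs 0)) (F1 (xs 1) (xs 3)) - F1 (F1 (xs 2) (xs 0)) (mul (xs 1) (xs 3))) - ε (αs 2 + αs 0) (αs 1) • (F1 (mul (xs 1) (F1 (xs 2) (xs 0))) (xs 3) + mul (F1 (xs 1) (F1 (xs 2) (xs 0))) (xs 3) - F1 (xs 1) (mul (F1 (xs 2) (xs 0)) (xs 3)) - mul (xs 1) (F1 (F1 (xs 2) (xs 0)) (xs 3)))) +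
      ((1:k)) • ((mul (F1 (F1 (xs 0) (xs 1)) (xs 2)) (xs 3) + F1 (mul (F1 (xs 0) (xs 1)) (xs 2)) (xs 3) - mul (F1 (xs 0) (xs 1)) (F1 (xs 2) (xs 3)) - F1 (F1 (xs 0) (xs 1)) (mul (xs 2) (xs 3))) - ε (αs 0 + αs 1) (αs 2) • (F1 (mul (xs 2) (F1 (xs 0) (xs 1))) (xs 3) + mul (F1 (xs 2) (F1 (xs 0) (xs 1))) (xs 3) - F1 (xs 2) (mul (F1 (xs 0) (xs 1)) (xs 3)) - mul (xs 2) (F1 (F1 (xs 0) (xs 1)) (xs 3)))) +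
      (-(ε (αs 0) (αs 1)) • ((mul (F1 (F1 (xs 1) (xs 0)) (xs 2)) (xs 3) + F1 (mul (F1 (xs 1) (xs 0)) (xs 2)) (xs 3) - mul (F1 (xs 1) (xs 0)) (F1 (xs 2) (xs 3)) - F1 (F1 (xs 1) (xs 0)) (mul (xs 2) (xs 3))) - ε (αs 1 + αs 0) (αs 2) • (F1 (mul (xs 2) (F1 (xs 1) (xs 0))) (xs 3) + mul (F1 (xs 2) (F1 (xs 1) (xs 0))) (xs 3) - F1 (xs 2) (mul (F1 (xs 1) (xs 0)) (xs 3)) - mul (xs 2) (F1 (F1 (xs 1) (xs 0)) (xs 3))))) := by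
    rw [h0, h1, h2, h3, h4, h5, h6, h7, h8, h9, h10, h11, h12, h13, h14]
    simp
  have m0 : (⟨1-1, by omega⟩ : Fin (3+1)) = 0 := rfl
  have m1 : (⟨2-1, by omega⟩ : Fin (3+1)) = 1 := rfl
  have m2 : (⟨3-1, by omega⟩ : Fin (3+1)) = 2 := rfl
  have ml : (Fin.last 3) = (3 : Fin 4) := rfl
  have hcs0 : (Fin.castSucc (0 : Fin 3)) = (0 : Fin 4) := rfl
  have hcs1 : (Fin.castSucc (1 : Fin 3)) = (1 : Fin 4) := rfl
  have hcs2 : (Fin.castSucc (2 : Fin 3)) = (2 : Fin 4) := rfl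
  have hsc0 : (Fin.succ (0 : Fin 3)) = (1 : Fin 4) := rfl
  have hsc1 : (Fin.succ (1 : Fin 3)) = (2 : Fin 4) := rfl
  have hsc2 : (Fin.succ (2 : Fin 3)) = (3 : Fin 4) := rfl
  have hIcc : Finset.Icc 1 3 = ({1,2,3} : Finset ℕ) := rfl
  have hIio0 : Finset.Iio (0 : Fin 4) = ∅ := by decide
  have hIio1 : Finset.Iio (1 : Fin 4) = {0} := by decide
  have hIio2 : Finset.Iio (2 : Fin 4) = {0, 1} := by decide
  have hIoo03 : Finset.Ioo (0 : Fin 4) 3 = {1, 2} := by decide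
  have hIoo13 : Finset.Ioo (1 : Fin 4) 3 = {2} := by decide
  have hIoo23 : Finset.Ioo (2 : Fin 4) 3 = ∅ := by decide
  have hIoo01 : Finset.Ioo (0 : Fin 4) 1 = ∅ := by decide
  have hIoo02 : Finset.Ioo (0 : Fin 4) 2 = {1} := by decide
  have hIoo12 : Finset.Ioo (1 : Fin 4) 2 = ∅ := by decide
  rw [lsaCoboundary, hIcc]
  simp +decide only [lsaD, mu2, Fin.removeNth, Fin.succAbove, m0, m1, m2, ml,
    hcs0, hcs1, hcs2, hsc0, hsc1, hsc2, Finset.sum_insert, Finset.sum_singleton,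
    Finset.sum_empty, Finset.mem_insert, Finset.mem_singleton,
    hIio0, hIio1, hIio2, hIoo03, hIoo13, hIoo23, hIoo01, hIoo02, hIoo12]
  norm_num [hz1, hz2]
  conv_rhs => rw [hzero]
  simp only [map_sub, map_add, map_smul, LinearMap.sub_apply, LinearMap.add_apply,
    LinearMap.smul_apply, smul_sub, smul_add, smul_smul]
  simp only [haddR, haddL, hz1, hz2, e10, e20, e21]
  match_scalars <;> field_simp <;> ring
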